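/- If G is an r-regular graph that admits a total domatic coloring with r colors, then every color class induces a perfect matching on itself (in particular each color class has even cardinality) and G contains a perfect matching. -/

import Mathlib

open SimpleGraph Finset

/-- A domatic `k`-coloring: every vertex sees all `k` colors in its closed neighborhood. -/
def IsDomaticColoring {V : Type*} (G : SimpleGraph V) (k : ℕ) (f : V → Fin k) : Prop :=
  ∀ v : V, ∀ c : Fin k, ∃ u : V, (u = v ∨ G.Adj v u) ∧ f u = c

/-- A total domatic `k`-coloring: every vertex sees all `k` colors in its open neighborhood. -/
def IsTotalDomaticColoring {V : Type*} (G : SimpleGraph V) (k : ℕ) (f : V → Fin k) : Prop :=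
  ∀ v : V, ∀ c : Fin k, ∃ u : V, G.Adj v u ∧ f u = c

/-- The domatic number `d(G)`. -/
noncomputable def domaticNumber {V : Type*} (G : SimpleGraph V) : ℕ :=
  sSup {k | ∃ f : V → Fin k, IsDomaticColoring G k f}

/-- The total domatic number `d_t(G)`. -/
noncomputable def totalDomaticNumber {V : Type*} (G : SimpleGraph V) : ℕ :=
  sSup {k | ∃ f : V → Fin k, IsTotalDomaticColoring G k f}

def IsDominatingSet {V : Type*} (G : SimpleGraph V) (D : Set V) : Prop :=
  ∀ v : V, v ∈ D ∨ ∃ u ∈ D, G.Adj v u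

def IsTotalDominatingSet {V : Type*} (G : SimpleGraph V) (D : Set V) : Prop :=
  ∀ v : V, ∃ u ∈ D, G.Adj v u

noncomputable def dominationNumber {V : Type*} (G : SimpleGraph V) [Fintype V] : ℕ :=
  sInf {n | ∃ D : Finset V, D.card = n ∧ IsDominatingSet G ↑D}

noncomputable def totalDominationNumber {V : Type*} (G : SimpleGraph V) [Fintype V] : ℕ :=
  sInf {n | ∃ D : Finset V, D.card = n ∧ IsTotalDominatingSet G ↑D}

/-- An injective `k`-coloring: vertices with a common neighbor get distinct colors. -/
def IsInjectiveColoring {V : Type*} (G : SimpleGraph V) (k : ℕ) (f : V → Fin k) : Prop :=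
  ∀ u w v : V, G.Adj v u → G.Adj v w → u ≠ w → f u ≠ f w

noncomputable def injChromaticNumber {V : Type*} (G : SimpleGraph V) : ℕ :=
  sInf {k | ∃ f : V → Fin k, IsInjectiveColoring G k f}

def NoIsolated {V : Type*} (G : SimpleGraph V) : Prop := ∀ v : V, ∃ u, G.Adj v u

/-- The Hamming graph `H(n,q)`: vertices differ in exactly one coordinate. -/
def hammingGraph (n q : ℕ) : SimpleGraph (Fin n → Fin q) :=
  SimpleGraph.fromRel (fun x y => ∃ i, x i ≠ y i ∧ ∀ j, j ≠ i → x j = y j)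

/-- The hypercube `Q n`. -/
def hypercube (n : ℕ) : SimpleGraph (Fin n → Fin 2) := hammingGraph n 2

/-- The torus `C_{k 0} □ ⋯ □ C_{k (d-1)}`. -/
def torusGraph (d : ℕ) (k : Fin d → ℕ) : SimpleGraph (∀ i : Fin d, ZMod (k i)) :=
  SimpleGraph.fromRel (fun x y => ∃ i, x i = y i + 1 ∧ ∀ j, j ≠ i → x j = y j)

theorem color_classes_perfect_matching {V : Type*} [Fintype V] [DecidableEq V]
    (G : SimpleGraph V) [DecidableRel G.Adj] (r : ℕ)
    (hreg : G.IsRegularOfDegree r) (f : V → Fin r) (hf : IsTotalDomaticColoring G r f) :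
    (∀ v : V, ∃! u : V, G.Adj v u ∧ f u = f v) ∧
    (∀ c : Fin r, Even ((Finset.univ.filter (fun v => f v = c)).card)) ∧
    (∃ M : G.Subgraph, M.IsPerfectMatching) := by
  -- uniqueness: f restricted to neighbors of v is injective
  have key : ∀ v : V, ∃! u : V, G.Adj v u ∧ f u = f v := by
    intro v
    have hinj : ∀ ⦃a₁⦄, a₁ ∈ G.neighborFinset v → ∀ ⦃a₂⦄, a₂ ∈ G.neighborFinset v →
        f a₁ = f a₂ → a₁ = a₂ :=
      Finset.inj_on_of_surj_on_of_card_le (t := Finset.univ)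
        (fun a _ => f a) (fun a _ => Finset.mem_univ _)
        (fun c _ => by
          obtain ⟨u, hu, hc⟩ := hf v c
          exact ⟨u, by simpa [SimpleGraph.mem_neighborFinset] using hu, hc⟩)
        (by rw [Finset.card_univ, Fintype.card_fin, G.card_neighborFinset_eq_degree]
            exact (hreg v).le)
    obtain ⟨u, hu, hc⟩ := hf v (f v)
    refine ⟨u, ⟨hu, hc⟩, ?_⟩
    rintro w ⟨hw, hwc⟩
    exact hinj (by simpa [SimpleGraph.mem_neighborFinset] using hw)
      (by simpa [SimpleGraph.mem_neighborFinset] using hu) (by rw [hwc, hc])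
  refine ⟨key, ?_, ?_⟩
  · intro c
    let M : G.Subgraph :=
      { verts := {v | f v = c}
        Adj := fun a b => G.Adj a b ∧ f a = c ∧ f b = c
        adj_sub := fun h => h.1
        edge_vert := fun h => h.2.1
        symm := ⟨fun a b h => ⟨h.1.symm, h.2.2, h.2.1⟩⟩ }
    have hM : M.IsMatching := by
      intro v hv
      obtain ⟨u, ⟨hu, huc⟩, huniq⟩ := key v
      have hvc : f v = c := hv
      refine ⟨u, ⟨hu, hvc, by rw [huc, hvc]⟩, ?_⟩
      rintro w ⟨hw, _, hwc⟩
      exact huniq w ⟨hw, by rw [hwc, hvc]⟩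
    have := hM.even_card
    have hverts : M.verts.toFinset = Finset.univ.filter (fun v => f v = c) := by
      ext x; simp [M]
    rwa [hverts] at this
  · let M : G.Subgraph :=
      { verts := Set.univ
        Adj := fun a b => G.Adj a b ∧ f a = f b
        adj_sub := fun h => h.1
        edge_vert := fun _ => Set.mem_univ _
        symm := ⟨fun a b h => ⟨h.1.symm, h.2.symm⟩⟩ }
    refine ⟨M, ?_, fun v => Set.mem_univ v⟩
    intro v _
    obtain ⟨u, ⟨hu, huc⟩, huniq⟩ := key v
    exact ⟨u, ⟨hu, huc.symm⟩, fun w ⟨hw, hwc⟩ => huniq w ⟨hw, hwc.symm⟩⟩
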